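/- Let L be an n×n real symmetric matrix with L·1ₙ = 0, and suppose there is an orthogonal matrix Q with QᵀLQ = diag(0, λ₂, …, λₙ) where λ₂, …, λₙ are distinct and strictly positive. Let M ⊆ {1, …, n} be nonempty, and suppose there exists i ∈ M such that every entry of the i-th row of Q is nonzero. Let C₁ be the |M|×n matrix whose rows are c_i·e_iᵀ for i ∈ M with c_i ≠ 0, let C be the |M|×2n matrix [C₁ | 0_{|M|×n}] (full observation of the monitored agents' positions), and let A be the 2n×2n block matrix [[0_{n×n}, I_n],[−L, −I_n]]. Then the kernel of the observability matrix obtained by stacking C, CA, CA², …, CA^{2n−1} is {0}; that is, the pair (A, C) is observable. -/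
import Mathlib


open Matrix

/-- Key recurrence lemma: if scalar sequences `u l` each satisfy the second-order
recurrence `u l (k+2) = -(lam l * u l k) - u l (k+1)` and their sum vanishes up to time
`2n`, then suitably weighted sums (weights given by products of eigenvalue differences)
also vanish on a shorter window. -/
private lemma seq_zero {n : ℕ} (lam : Fin n → ℝ) (u : Fin n → ℕ → ℝ)
    (hrec : ∀ l k, u l (k + 2) = -(lam l * u l k) - u l (k + 1))
    (hsum : ∀ k, k < 2 * n → ∑ l, u l k = 0) :
    ∀ S : Finset (Fin n), ∀ k, k + 2 * S.card < 2 * n →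
      ∑ l, (∏ m ∈ S, (lam m - lam l)) * u l k = 0 := by
  intro S
  induction S using Finset.induction_on with
  | empty =>
    intro k hk
    simpa using hsum k (by simpa using hk)
  | @insert m S hm ih =>
    intro k hk
    rw [Finset.card_insert_of_notMem hm] at hk
    have h0 := ih k (by omega)
    have h1 := ih (k + 1) (by omega)
    have h2 := ih (k + 2) (by omega)
    have key : ∀ l : Fin n, (∏ m' ∈ insert m S, (lam m' - lam l)) * u l k
        = (∏ m' ∈ S, (lam m' - lam l)) * u l (k + 2)
          + (∏ m' ∈ S, (lam m' - lam l)) * u l (k + 1)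
          + lam m * ((∏ m' ∈ S, (lam m' - lam l)) * u l k) := by
      intro l
      rw [Finset.prod_insert hm]
      linear_combination -(∏ m' ∈ S, (lam m' - lam l)) * hrec l k
    rw [Finset.sum_congr rfl fun l _ => key l]
    rw [Finset.sum_add_distrib, Finset.sum_add_distrib, ← Finset.mul_sum, h0, h1, h2]
    ring

/-- Modal analysis: if `X` satisfies the vector recurrence coming from the consensus
dynamics and the `i`-th coordinate of `X k` vanishes for `k < 2n`, where the `i`-th row of
the diagonalizing orthogonal matrix `Q` has no zero entries and the eigenvalues are
pairwise distinct, then `X 0 = X 1 = 0`. -/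
private lemma mode_zero {n : ℕ} (hn : 0 < n)
    (Q L : Matrix (Fin n) (Fin n) ℝ) (hQ : Qᵀ * Q = 1)
    (lam : Fin n → ℝ)
    (hdist : ∀ l m : Fin n, m ≠ l → lam m - lam l ≠ 0)
    (hQTL : Qᵀ * L = Matrix.diagonal lam * Qᵀ)
    (i : Fin n) (hiQ : ∀ j, Q i j ≠ 0)
    (X : ℕ → Fin n → ℝ)
    (hXrec : ∀ k, X (k + 2) = -(L *ᵥ X k) - X (k + 1))
    (hXi : ∀ k, k < 2 * n → X k i = 0) :
    ∀ k, k ≤ 1 → X k = 0 := by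
  have hQQT : Q * Qᵀ = 1 := mul_eq_one_comm.mpr hQ
  have harec : ∀ (l : Fin n) (k : ℕ), Q i l * (Qᵀ *ᵥ X (k + 2)) l
      = -(lam l * (Q i l * (Qᵀ *ᵥ X k) l)) - Q i l * (Qᵀ *ᵥ X (k + 1)) l := by
    intro l k
    have h : Qᵀ *ᵥ X (k + 2)
        = -(Matrix.diagonal lam *ᵥ (Qᵀ *ᵥ X k)) - Qᵀ *ᵥ X (k + 1) := by
      rw [hXrec k, Matrix.mulVec_sub, Matrix.mulVec_neg, Matrix.mulVec_mulVec, hQTL,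
        ← Matrix.mulVec_mulVec]
    rw [h]
    simp only [Pi.sub_apply, Pi.neg_apply, Matrix.mulVec_diagonal]
    ring
  have hsum : ∀ k, k < 2 * n → ∑ l, Q i l * (Qᵀ *ᵥ X k) l = 0 := by
    intro k hk
    have h1 : ∑ l, Q i l * (Qᵀ *ᵥ X k) l = (Q *ᵥ (Qᵀ *ᵥ X k)) i := by
      simp [Matrix.mulVec, dotProduct]
    rw [h1, Matrix.mulVec_mulVec, hQQT, Matrix.one_mulVec]
    exact hXi k hk
  have hkey := seq_zero lam (fun l k => Q i l * (Qᵀ *ᵥ X k) l) harec hsum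
  have ha : ∀ k, k ≤ 1 → ∀ j, (Qᵀ *ᵥ X k) j = 0 := by
    intro k hk j
    have hcard : (Finset.univ.erase j).card = n - 1 := by
      rw [Finset.card_erase_of_mem (Finset.mem_univ j), Finset.card_univ, Fintype.card_fin]
    have h : ∑ l, (∏ m ∈ Finset.univ.erase j, (lam m - lam l)) * (Q i l * (Qᵀ *ᵥ X k) l)
        = 0 := hkey (Finset.univ.erase j) k (by rw [hcard]; omega)
    rw [Finset.sum_eq_single_of_mem j (Finset.mem_univ j)
      (fun l _ hlj => by
        rw [Finset.prod_eq_zero (Finset.mem_erase.mpr ⟨hlj, Finset.mem_univ l⟩)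
          (sub_self (lam l)), zero_mul])] at h
    have hprod : (∏ m ∈ Finset.univ.erase j, (lam m - lam j)) ≠ 0 :=
      Finset.prod_ne_zero_iff.mpr fun m hm => hdist j m (Finset.mem_erase.mp hm).1
    rcases mul_eq_zero.mp h with h' | h'
    · exact absurd h' hprod
    · rcases mul_eq_zero.mp h' with h'' | h''
      · exact absurd h'' (hiQ j)
      · exact h''
  intro k hk
  have haz : Qᵀ *ᵥ X k = 0 := funext (ha k hk)
  calc X k = (Q * Qᵀ) *ᵥ X k := by rw [hQQT, Matrix.one_mulVec]
    _ = Q *ᵥ (Qᵀ *ᵥ X k) := (Matrix.mulVec_mulVec _ _ _).symm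
    _ = 0 := by rw [haz, Matrix.mulVec_zero]

/-- Theorem 1, second bullet (eq. (40)): under full position observation of the monitored
agents, the kernel of the stacked observability matrix of `A = [[0, I], [-L, -I]]` is `{0}`,
i.e. the pair `(A, C)` is observable. -/
theorem stmt_7 {n : ℕ} [NeZero n]
    (L Q : Matrix (Fin n) (Fin n) ℝ) (hLsymm : L.IsSymm)
    (hL1 : L.mulVec (fun _ => (1:ℝ)) = 0)
    (hQ : Qᵀ * Q = 1)
    (lam : Fin n → ℝ) (hlam0 : lam 0 = 0)
    (hlampos : ∀ i : Fin n, i ≠ 0 → 0 < lam i)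
    (hlamdist : ∀ i j : Fin n, i ≠ 0 → j ≠ 0 → i ≠ j → lam i ≠ lam j)
    (hdiag : Qᵀ * L * Q = Matrix.diagonal lam)
    (M : Finset (Fin n)) (hM : M.Nonempty)
    (hdef : ∃ i ∈ M, ∀ j, Q i j ≠ 0)
    (c : Fin n → ℝ) (hc : ∀ i ∈ M, c i ≠ 0)
    (C : Matrix {i // i ∈ M} (Fin n ⊕ Fin n) ℝ)
    (hC : ∀ (i : {i // i ∈ M}) (j : Fin n ⊕ Fin n),
      C i j = Sum.elim (fun k : Fin n => if k = (i : Fin n) then c (i : Fin n) else 0)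
        (fun _ : Fin n => (0:ℝ)) j)
    (A : Matrix (Fin n ⊕ Fin n) (Fin n ⊕ Fin n) ℝ)
    (hA : A = Matrix.fromBlocks 0 1 (-L) (-1)) :
    {z : Fin n ⊕ Fin n → ℝ | ∀ k : ℕ, k < 2 * n → (C * A ^ k).mulVec z = 0}
      = {(0 : Fin n ⊕ Fin n → ℝ)} := by
  have hn : 0 < n := Nat.pos_of_ne_zero (NeZero.ne n)
  obtain ⟨i, hiM, hiQ⟩ := hdef
  have hQQT : Q * Qᵀ = 1 := mul_eq_one_comm.mpr hQ
  have hQTL : Qᵀ * L = Matrix.diagonal lam * Qᵀ := by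
    calc Qᵀ * L = Qᵀ * L * (Q * Qᵀ) := by rw [hQQT, Matrix.mul_one]
      _ = (Qᵀ * L * Q) * Qᵀ := by rw [Matrix.mul_assoc (Qᵀ * L)]
      _ = Matrix.diagonal lam * Qᵀ := by rw [hdiag]
  have hdist : ∀ l m : Fin n, m ≠ l → lam m - lam l ≠ 0 := by
    intro l m hml
    refine sub_ne_zero.mpr ?_
    rcases eq_or_ne m 0 with hm | hm <;> rcases eq_or_ne l 0 with hl | hl
    · exact absurd (hm.trans hl.symm) hml
    · rw [hm, hlam0]; exact (hlampos l hl).ne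
    · rw [hl, hlam0]; exact (hlampos m hm).ne'
    · exact hlamdist m l hm hl hml
  ext z
  simp only [Set.mem_setOf_eq, Set.mem_singleton_iff]
  constructor
  · intro hz
    have hW : ∀ k : ℕ, (A ^ (k + 1)) *ᵥ z = Sum.elim ((A ^ k *ᵥ z) ∘ Sum.inr)
        (-(L *ᵥ ((A ^ k *ᵥ z) ∘ Sum.inl)) - (A ^ k *ᵥ z) ∘ Sum.inr) := by
      intro k
      rw [pow_succ', ← Matrix.mulVec_mulVec, hA, Matrix.fromBlocks_mulVec]
      funext t
      cases t <;>
        simp [Matrix.zero_mulVec, Matrix.one_mulVec, Matrix.neg_mulVec, sub_eq_add_neg]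
    have hXstep : ∀ (k : ℕ) (j : Fin n),
        (A ^ (k + 1) *ᵥ z) (Sum.inl j) = (A ^ k *ᵥ z) (Sum.inr j) := by
      intro k j; rw [hW k]; rfl
    have hXrec : ∀ k : ℕ, (fun j => (A ^ (k + 2) *ᵥ z) (Sum.inl j))
        = -(L *ᵥ (fun j => (A ^ k *ᵥ z) (Sum.inl j)))
          - (fun j => (A ^ (k + 1) *ᵥ z) (Sum.inl j)) := by
      intro k
      funext j
      have h2 : (A ^ (k + 2) *ᵥ z) (Sum.inl j) = (A ^ (k + 1) *ᵥ z) (Sum.inr j) :=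
        hXstep (k + 1) j
      have h1 : (A ^ (k + 1) *ᵥ z) (Sum.inr j)
          = -(L *ᵥ fun t => (A ^ k *ᵥ z) (Sum.inl t)) j - (A ^ k *ᵥ z) (Sum.inr j) := by
        rw [hW k]; rfl
      rw [h2, h1, ← hXstep k j]
      rfl
    have hXi : ∀ k, k < 2 * n → (A ^ k *ᵥ z) (Sum.inl i) = 0 := by
      intro k hk
      have h := congrFun (hz k hk) ⟨i, hiM⟩
      rw [← Matrix.mulVec_mulVec] at h
      have h2 : (C *ᵥ (A ^ k *ᵥ z)) ⟨i, hiM⟩ = c i * (A ^ k *ᵥ z) (Sum.inl i) := by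
        simp [Matrix.mulVec, dotProduct, hC, Fintype.sum_sum_type, ite_mul]
      rw [h2] at h
      exact (mul_eq_zero.mp h).resolve_left (hc i hiM)
    have hX0 := mode_zero hn Q L hQ lam hdist hQTL i hiQ
      (fun k j => (A ^ k *ᵥ z) (Sum.inl j)) hXrec hXi
    funext t
    cases t with
    | inl j =>
      have h := congrFun (hX0 0 (by norm_num)) j
      simpa [Matrix.one_mulVec] using h
    | inr j =>
      have h : (A ^ (0 + 1) *ᵥ z) (Sum.inl j) = 0 := congrFun (hX0 1 le_rfl) j
      rw [hXstep 0 j] at h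
      simpa [Matrix.one_mulVec] using h
  · rintro rfl
    intro k _
    exact Matrix.mulVec_zero _
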